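/- Let q be a prime power and let b, n be positive integers with n ≥ b. Let u = (u_0, …, u_{n-1}) and v = (v_0, …, v_{n-1}) be vectors in F_q^n such that u_i = v_i for every i ∈ {0, 1, …, b-2}. Then the concatenation (u, v) ∈ F_q^{2n} satisfies wt_b((u, v)) = wt_b(u) + wt_b(v). -/

import Mathlib

/-- The `b`-symbol weight of a vector `c ∈ F^n` (coordinates indexed cyclically by `ZMod n`). -/
noncomputable def bWt {n : ℕ} {F : Type*} [Zero F] (b : ℕ) (c : ZMod n → F) : ℕ :=
  Nat.card {i : ZMod n | ∃ j < b, c (i + (j : ZMod n)) ≠ 0}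

/-- The concatenation `(u, v) ∈ F^{2n}` of two vectors `u, v ∈ F^n`. -/
def concat2 {n : ℕ} {F : Type*} (u v : ZMod n → F) : ZMod (2 * n) → F :=
  fun i => if i.val < n then u ((i.val : ℕ) : ZMod n) else v (((i.val - n : ℕ)) : ZMod n)

open scoped Classical in
lemma bWt_eq_sum {n : ℕ} [NeZero n] {F : Type*} [Zero F] (b : ℕ) (c : ZMod n → F) :
    bWt b c = ∑ i : ZMod n, if ∃ j < b, c (i + (j : ZMod n)) ≠ 0 then 1 else 0 := by
  rw [bWt, Nat.card_eq_fintype_card, Fintype.card_subtype, Finset.card_filter]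
  simp only [Set.mem_setOf_eq]

/-- If `u_i = v_i` for all `i ∈ {0, …, b-2}`, then `wt_b((u,v)) = wt_b(u) + wt_b(v)`. -/
theorem stmt6 (q b n : ℕ) (hb : 0 < b) (hbn : b ≤ n)
    (F : Type*) [Field F] [Fintype F] (hF : Fintype.card F = q)
    (u v : ZMod n → F)
    (huv : ∀ i : ℕ, i + 1 < b → u ((i : ℕ) : ZMod n) = v ((i : ℕ) : ZMod n)) :
    bWt b (concat2 u v) = bWt b u + bWt b v := by
  classical
  have hn : 0 < n := hb.trans_le hbn
  haveI : NeZero n := ⟨hn.ne'⟩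
  haveI : NeZero (2 * n) := ⟨by omega⟩
  -- key pointwise lemmas
  have keyA : ∀ i : ZMod (2*n), i.val < n → ∀ j : ℕ, j < b →
      concat2 u v (i + (j : ZMod (2*n))) = u (((i.val : ℕ) : ZMod n) + (j : ZMod n)) := by
    intro i hi j hj
    have hjval : ((j : ZMod (2*n))).val = j := ZMod.val_natCast_of_lt (by omega)
    have hv : (i + (j : ZMod (2*n))).val = i.val + j := by
      rw [ZMod.val_add, hjval, Nat.mod_eq_of_lt (by omega)]
    have hcast : (((i.val : ℕ) : ZMod n) + (j : ZMod n)) = ((i.val + j : ℕ) : ZMod n) := by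
      push_cast; ring
    rw [show concat2 u v (i + (j : ZMod (2*n))) =
        if (i + (j : ZMod (2*n))).val < n then u (((i + (j : ZMod (2*n))).val : ℕ) : ZMod n)
        else v ((((i + (j : ZMod (2*n))).val - n : ℕ)) : ZMod n) from rfl, hv, hcast]
    by_cases h : i.val + j < n
    · simp [h]
    · simp only [if_neg h]
      have hk : (i.val + j - n) + 1 < b := by omega
      have hc2 : ((i.val + j : ℕ) : ZMod n) = ((i.val + j - n : ℕ) : ZMod n) := by
        have he : i.val + j = (i.val + j - n) + 1 * n := by omega
        rw [he]; push_cast; simp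
      rw [hc2]
      exact (huv _ hk).symm
  have keyB : ∀ i : ZMod (2*n), ¬ i.val < n → ∀ j : ℕ, j < b →
      concat2 u v (i + (j : ZMod (2*n))) = v (((i.val - n : ℕ) : ZMod n) + (j : ZMod n)) := by
    intro i hi j hj
    have hi2 : i.val < 2*n := ZMod.val_lt i
    have hjval : ((j : ZMod (2*n))).val = j := ZMod.val_natCast_of_lt (by omega)
    have hcast : (((i.val - n : ℕ) : ZMod n) + (j : ZMod n)) = ((i.val - n + j : ℕ) : ZMod n) := by
      push_cast; ring
    rw [show concat2 u v (i + (j : ZMod (2*n))) =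
        if (i + (j : ZMod (2*n))).val < n then u (((i + (j : ZMod (2*n))).val : ℕ) : ZMod n)
        else v ((((i + (j : ZMod (2*n))).val - n : ℕ)) : ZMod n) from rfl, hcast]
    by_cases h : i.val + j < 2*n
    · have hv : (i + (j : ZMod (2*n))).val = i.val + j := by
        rw [ZMod.val_add, hjval, Nat.mod_eq_of_lt h]
      rw [hv, if_neg (by omega)]
      congr 2
      omega
    · have hv : (i + (j : ZMod (2*n))).val = i.val + j - 2*n := by
        rw [ZMod.val_add, hjval, Nat.mod_eq_sub_mod (by omega), Nat.mod_eq_of_lt (by omega)]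
      rw [hv, if_pos (by omega)]
      have hk : (i.val + j - 2*n) + 1 < b := by omega
      rw [huv _ hk]
      congr 1
      have he : i.val - n + j = (i.val + j - 2*n) + 1 * n := by omega
      rw [he]; push_cast; simp
  rw [bWt_eq_sum, bWt_eq_sum, bWt_eq_sum]
  rw [← Finset.sum_filter_add_sum_filter_not Finset.univ (fun i : ZMod (2*n) => i.val < n)]
  congr 1
  · refine Finset.sum_nbij' (fun i => ((i.val : ℕ) : ZMod n))
      (fun a => ((a.val : ℕ) : ZMod (2*n))) ?_ ?_ ?_ ?_ ?_
    · intro a _; exact Finset.mem_univ _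
    · intro a _
      simp only [Finset.mem_filter, Finset.mem_univ, true_and]
      rw [ZMod.val_natCast_of_lt (by have := ZMod.val_lt a; omega)]
      exact ZMod.val_lt a
    · intro a ha
      simp only [Finset.mem_filter, Finset.mem_univ, true_and] at ha
      rw [ZMod.val_natCast_of_lt ha]
      exact ZMod.natCast_rightInverse a
    · intro a _
      rw [ZMod.val_natCast_of_lt (by have := ZMod.val_lt a; omega : a.val < 2*n)]
      exact ZMod.natCast_rightInverse a
    · intro i hi
      simp only [Finset.mem_filter, Finset.mem_univ, true_and] at hi
      have hiff : (∃ j < b, concat2 u v (i + (j : ZMod (2*n))) ≠ 0) ↔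
          (∃ j < b, u (((i.val : ℕ) : ZMod n) + (j : ZMod n)) ≠ 0) := by
        constructor
        · rintro ⟨j, hj, hne⟩; exact ⟨j, hj, by rwa [keyA i hi j hj] at hne⟩
        · rintro ⟨j, hj, hne⟩; exact ⟨j, hj, by rwa [keyA i hi j hj]⟩
      rw [if_congr hiff rfl rfl]
  · refine Finset.sum_nbij' (fun i => ((i.val - n : ℕ) : ZMod n))
      (fun a => ((a.val + n : ℕ) : ZMod (2*n))) ?_ ?_ ?_ ?_ ?_
    · intro a _; exact Finset.mem_univ _
    · intro a _
      simp only [Finset.mem_filter, Finset.mem_univ, true_and, not_lt]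
      rw [ZMod.val_natCast_of_lt (by have := ZMod.val_lt a; omega)]
      omega
    · intro a ha
      simp only [Finset.mem_filter, Finset.mem_univ, true_and, not_lt] at ha
      have h2 := ZMod.val_lt a
      rw [ZMod.val_natCast_of_lt (by omega : a.val - n < n)]
      rw [show a.val - n + n = a.val by omega]
      exact ZMod.natCast_rightInverse a
    · intro a _
      have h2 := ZMod.val_lt a
      rw [ZMod.val_natCast_of_lt (by omega : a.val + n < 2*n)]
      rw [show a.val + n - n = a.val by omega]
      exact ZMod.natCast_rightInverse a
    · intro i hi
      simp only [Finset.mem_filter, Finset.mem_univ, true_and] at hi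
      have hiff : (∃ j < b, concat2 u v (i + (j : ZMod (2*n))) ≠ 0) ↔
          (∃ j < b, v (((i.val - n : ℕ) : ZMod n) + (j : ZMod n)) ≠ 0) := by
        constructor
        · rintro ⟨j, hj, hne⟩; exact ⟨j, hj, by rwa [keyB i hi j hj] at hne⟩
        · rintro ⟨j, hj, hne⟩; exact ⟨j, hj, by rwa [keyB i hi j hj]⟩
      rw [if_congr hiff rfl rfl]
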